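/- Let G be a stabilizer group of rank k on I = I₁ ⊕ I₂ with stabilizer density matrix ρ = 2^{-N_A}·Σ_{g∈G} g, and let k₁, k₂ be the ranks of the subgroups G_{A1}, G_{A2} of elements supported in A₁, A₂ respectively. Then for every even natural number n ≥ 2, Tr[(R_ρ† R_ρ)^{n/2}] = 2^{k + (n/2 − 1)(k₁ + k₂) − (n/2)·N_A}. -/

import Mathlib

open scoped ComplexOrder Matrix

noncomputable section

/-- The single-qubit Pauli matrices `σ⁰, σˣ, σʸ, σᶻ`. -/
def pauli : Fin 4 → Matrix (Fin 2) (Fin 2) ℂ :=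
  ![1, !![0, 1; 1, 0], !![0, -Complex.I; Complex.I, 0], !![1, 0; 0, -1]]

/-- Configurations of the qubits on `I₁ ⊕ I₂`, presented in factorized form. -/
abbrev Config (I₁ I₂ : Type) := (I₁ → Fin 2) × (I₂ → Fin 2)

variable {I₁ I₂ : Type} [Fintype I₁] [Fintype I₂] [DecidableEq I₁] [DecidableEq I₂]

/-- The sign-free tensor product `⨂_{i ∈ I₁ ⊕ I₂} σ^{a(i)}` of single-qubit Pauli
matrices, as a matrix on the factorized configuration space. -/
def pauliTensor (a : I₁ ⊕ I₂ → Fin 4) :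
    Matrix (Config I₁ I₂) (Config I₁ I₂) ℂ :=
  fun c c' => ∏ i, pauli (a i) (Sum.elim c.1 c.2 i) (Sum.elim c'.1 c'.2 i)

/-- A Pauli operator on `I₁ ⊕ I₂`: `ε·⨂ᵢ σ^{a(i)}` with `ε ∈ {1,−1}`. -/
def IsPauli (M : Matrix (Config I₁ I₂) (Config I₁ I₂) ℂ) : Prop :=
  ∃ (ε : ℂ) (a : I₁ ⊕ I₂ → Fin 4), (ε = 1 ∨ ε = -1) ∧ M = ε • pauliTensor a

/-- A Pauli operator supported in `A₁`, i.e. acting trivially on all sites of `I₂`. -/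
def SupportedIn1 (M : Matrix (Config I₁ I₂) (Config I₁ I₂) ℂ) : Prop :=
  ∃ (ε : ℂ) (a : I₁ ⊕ I₂ → Fin 4), (ε = 1 ∨ ε = -1) ∧ M = ε • pauliTensor a ∧
    ∀ i : I₂, a (Sum.inr i) = 0

/-- A Pauli operator supported in `A₂`, i.e. acting trivially on all sites of `I₁`. -/
def SupportedIn2 (M : Matrix (Config I₁ I₂) (Config I₁ I₂) ℂ) : Prop :=
  ∃ (ε : ℂ) (a : I₁ ⊕ I₂ → Fin 4), (ε = 1 ∨ ε = -1) ∧ M = ε • pauliTensor a ∧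
    ∀ i : I₁, a (Sum.inl i) = 0

/-- A stabilizer group on `I₁ ⊕ I₂`: a finite abelian group of Pauli operators under
matrix multiplication not containing `-1`; every element is Hermitian and squares to
the identity. -/
structure StabilizerGroup (I₁ I₂ : Type) [Fintype I₁] [Fintype I₂]
    [DecidableEq I₁] [DecidableEq I₂] where
  carrier : Finset (Matrix (Config I₁ I₂) (Config I₁ I₂) ℂ)
  isPauli : ∀ g ∈ carrier, IsPauli g
  one_mem : (1 : Matrix (Config I₁ I₂) (Config I₁ I₂) ℂ) ∈ carrier
  mul_mem : ∀ g ∈ carrier, ∀ h ∈ carrier, g * h ∈ carrier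
  mul_comm : ∀ g ∈ carrier, ∀ h ∈ carrier, g * h = h * g
  neg_one_not_mem : (-1 : Matrix (Config I₁ I₂) (Config I₁ I₂) ℂ) ∉ carrier
  hermitian : ∀ g ∈ carrier, g.IsHermitian
  sq_eq_one : ∀ g ∈ carrier, g * g = 1

/-- The stabilizer density matrix `ρ = 2^{−N_A}·Σ_{g ∈ G} g`. -/
def stabDensity (G : StabilizerGroup I₁ I₂) :
    Matrix (Config I₁ I₂) (Config I₁ I₂) ℂ :=
  ((2 : ℂ) ^ (Fintype.card I₁ + Fintype.card I₂))⁻¹ • ∑ g ∈ G.carrier, g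

/-- The realignment of a matrix on a bipartite system:
`R_M[(c₁,c₁'),(c₂,c₂')] = M[(c₁,c₂),(c₁',c₂')]`. -/
def realign {C₁ C₂ : Type*} (M : Matrix (C₁ × C₂) (C₁ × C₂) ℂ) :
    Matrix (C₁ × C₁) (C₂ × C₂) ℂ :=
  fun p q => M (p.1, q.1) (p.2, q.2)

/-- The partial transpose on the second factor:
`M^{T₂}[(c₁,c₂),(c₁',c₂')] = M[(c₁,c₂'),(c₁',c₂)]`. -/
def ptranspose {C₁ C₂ R : Type*} (M : Matrix (C₁ × C₂) (C₁ × C₂) R) :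
    Matrix (C₁ × C₂) (C₁ × C₂) R :=
  fun c c' => M (c.1, c'.2) (c'.1, c.2)

/-- The trace norm `‖M‖₁ = Tr√(MᴴM)` of a complex matrix. -/
def traceNorm {m n : Type*} [Fintype m] [Fintype n] [DecidableEq n]
    (M : Matrix m n ℂ) : ℝ :=
  (((Matrix.posSemidef_conjTranspose_mul_self M).1.eigenvectorUnitary : Matrix n n ℂ) *
    Matrix.diagonal (((↑) : ℝ → ℂ) ∘ (√·) ∘ (Matrix.posSemidef_conjTranspose_mul_self M).1.eigenvalues) *
    (star (Matrix.posSemidef_conjTranspose_mul_self M).1.eigenvectorUnitary :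
      Matrix n n ℂ)).trace.re

end

noncomputable section
namespace SP

/-- product string table (Klein four-group on Fin 4) -/
def pm : Fin 4 → Fin 4 → Fin 4 :=
  ![![0,1,2,3], ![1,0,3,2], ![2,3,0,1], ![3,2,1,0]]

lemma pm_self (a : Fin 4) : pm a a = 0 := by revert a; decide
lemma pm_zero (a : Fin 4) : pm a 0 = a := by revert a; decide
lemma pm_comm (a b : Fin 4) : pm a b = pm b a := by revert a b; decide
lemma pm_cancel (a b : Fin 4) : pm a (pm a b) = b := by revert a b; decide
lemma pm_assoc (a b c : Fin 4) : pm (pm a b) c = pm a (pm b c) := by revert a b c; decide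

def pph : Fin 4 → Fin 4 → ℂ
  | ⟨0,_⟩, _ => 1
  | _, ⟨0,_⟩ => 1
  | ⟨1,_⟩, ⟨1,_⟩ => 1
  | ⟨2,_⟩, ⟨2,_⟩ => 1
  | ⟨3,_⟩, ⟨3,_⟩ => 1
  | ⟨1,_⟩, ⟨2,_⟩ => Complex.I
  | ⟨2,_⟩, ⟨1,_⟩ => -Complex.I
  | ⟨2,_⟩, ⟨3,_⟩ => Complex.I
  | ⟨3,_⟩, ⟨2,_⟩ => -Complex.I
  | ⟨3,_⟩, ⟨1,_⟩ => Complex.I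
  | ⟨1,_⟩, ⟨3,_⟩ => -Complex.I
  | ⟨_+4,h⟩, _ => absurd h (by omega)
  | _, ⟨_+4,h⟩ => absurd h (by omega)

lemma pph_ne (a b : Fin 4) : pph a b ≠ 0 := by
  fin_cases a <;> fin_cases b <;> simp [pph] <;> exact Complex.I_ne_zero

lemma pauli_mul (a b : Fin 4) : pauli a * pauli b = pph a b • pauli (pm a b) := by
  fin_cases a <;> fin_cases b <;>
    · ext i j
      fin_cases i <;> fin_cases j <;>
        simp [pauli, pph, pm, Matrix.mul_apply, Fin.sum_univ_succ, Matrix.one_apply] <;>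
        ring_nf <;> simp [Complex.I_sq] <;> ring

lemma pauli_conj (a : Fin 4) (x y : Fin 2) :
    (starRingEnd ℂ) (pauli a x y) = pauli a y x := by
  fin_cases a <;> fin_cases x <;> fin_cases y <;>
    simp [pauli, Matrix.one_apply]

lemma pauli_orth (a b : Fin 4) :
    ∑ x : Fin 2, ∑ y : Fin 2, (starRingEnd ℂ) (pauli a x y) * pauli b x y
      = if a = b then 2 else 0 := by
  fin_cases a <;> fin_cases b <;>
    simp [pauli, Fin.sum_univ_succ, Matrix.one_apply] <;> ring_nf <;>
    simp [Complex.I_sq, Complex.conj_I] <;> ring_nf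

lemma pauli_diag (a : Fin 4) :
    ∑ x : Fin 2, pauli a x x = if a = 0 then 2 else 0 := by
  fin_cases a <;> simp [pauli, Fin.sum_univ_succ, Matrix.one_apply] <;> norm_num

end SP
namespace SP

lemma pph_self (a : Fin 4) : pph a a = 1 := by fin_cases a <;> rfl

section STR

variable {J : Type} [Fintype J] [DecidableEq J]

/-- tensor product of single-site Pauli matrices along a string -/
def strM (b : J → Fin 4) : Matrix (J → Fin 2) (J → Fin 2) ℂ :=
  fun c c' => ∏ j, pauli (b j) (c j) (c' j)

lemma strM_zero : strM (0 : J → Fin 4) = 1 := by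
  ext c c'
  simp only [strM, Matrix.one_apply, Pi.zero_apply]
  by_cases h : c = c'
  · subst h; simp [pauli, Matrix.one_apply]
  · rw [if_neg h]
    obtain ⟨j, hj⟩ : ∃ j, c j ≠ c' j := by
      by_contra hc; push_neg at hc; exact h (funext hc)
    exact Finset.prod_eq_zero (Finset.mem_univ j) (by simp [pauli, Matrix.one_apply, hj])

lemma strM_conj (b : J → Fin 4) (c c' : J → Fin 2) :
    (starRingEnd ℂ) (strM b c c') = strM b c' c := by
  simp only [strM, map_prod, SP.pauli_conj]

lemma strM_mul_apply (a b : J → Fin 4) (c c'' : J → Fin 2) :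
    (strM a * strM b) c c'' = ∏ j, (pauli (a j) * pauli (b j)) (c j) (c'' j) := by
  simp only [Matrix.mul_apply, strM]
  have hd : ∀ x : J → Fin 2, (∏ j, pauli (a j) (c j) (x j)) * ∏ j, pauli (b j) (x j) (c'' j)
      = ∏ j, pauli (a j) (c j) (x j) * pauli (b j) (x j) (c'' j) :=
    fun x => (Finset.prod_mul_distrib).symm
  simp_rw [hd]
  exact (Fintype.prod_sum fun j y => pauli (a j) (c j) y * pauli (b j) y (c'' j)).symm

/-- total phase of a product of two strings -/
def strP (a b : J → Fin 4) : ℂ := ∏ j, pph (a j) (b j)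

lemma strP_ne (a b : J → Fin 4) : strP a b ≠ 0 :=
  Finset.prod_ne_zero_iff.2 fun j _ => SP.pph_ne _ _

lemma strM_mul (a b : J → Fin 4) :
    strM a * strM b = strP a b • strM (fun j => SP.pm (a j) (b j)) := by
  ext c c''
  rw [strM_mul_apply]
  simp only [Matrix.smul_apply, strM, strP, smul_eq_mul, ← Finset.prod_mul_distrib]
  exact Finset.prod_congr rfl fun j _ => by rw [SP.pauli_mul]; rfl

lemma strM_sq (a : J → Fin 4) : strM a * strM a = 1 := by
  rw [strM_mul]
  have h1 : (fun j => SP.pm (a j) (a j)) = (0 : J → Fin 4) := funext fun j => SP.pm_self _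
  have h2 : strP a a = 1 := Finset.prod_eq_one fun j _ => pph_self _
  rw [h1, h2, strM_zero, one_smul]

lemma sum_sum_prod (f : J → Fin 2 → Fin 2 → ℂ) :
    ∑ c : J → Fin 2, ∑ c' : J → Fin 2, ∏ j, f j (c j) (c' j)
      = ∏ j, ∑ x : Fin 2, ∑ y : Fin 2, f j x y := by
  have h1 : ∀ c : J → Fin 2, ∑ c' : J → Fin 2, ∏ j, f j (c j) (c' j)
      = ∏ j, ∑ y, f j (c j) y := fun c => (Fintype.prod_sum fun j y => f j (c j) y).symm
  simp_rw [h1]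
  exact (Fintype.prod_sum fun j x => ∑ y, f j x y).symm

lemma prod_ite_str (a b : J → Fin 4) :
    (∏ j, if a j = b j then (2 : ℂ) else 0)
      = if a = b then (2 : ℂ) ^ Fintype.card J else 0 := by
  by_cases h : a = b
  · subst h
    rw [if_pos rfl]
    simp only [eq_self_iff_true, if_true]
    rw [Finset.prod_const, Finset.card_univ]
  · rw [if_neg h]
    obtain ⟨j, hj⟩ : ∃ j, a j ≠ b j := by
      by_contra hc; push_neg at hc; exact h (funext hc)
    exact Finset.prod_eq_zero (Finset.mem_univ j) (by simp [hj])

lemma strM_orth (a b : J → Fin 4) :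
    ∑ c : J → Fin 2, ∑ c' : J → Fin 2,
      (starRingEnd ℂ) (strM a c c') * strM b c c'
      = if a = b then (2 : ℂ) ^ Fintype.card J else 0 := by
  have : ∀ (c c' : J → Fin 2), (starRingEnd ℂ) (strM a c c') * strM b c c'
      = ∏ j, (starRingEnd ℂ) (pauli (a j) (c j) (c' j)) * pauli (b j) (c j) (c' j) := by
    intro c c'
    simp only [strM, map_prod, ← Finset.prod_mul_distrib]
  simp_rw [this]
  rw [sum_sum_prod (fun j x y => (starRingEnd ℂ) (pauli (a j) x y) * pauli (b j) x y)]
  simp_rw [pauli_orth]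
  exact prod_ite_str a b

lemma strM_trace_mul (a b : J → Fin 4) :
    (strM a * strM b).trace = if a = b then (2 : ℂ) ^ Fintype.card J else 0 := by
  have : (strM a * strM b).trace
      = ∑ c : J → Fin 2, ∑ c' : J → Fin 2, strM a c c' * strM b c' c := by
    simp only [Matrix.trace, Matrix.diag_apply, Matrix.mul_apply]
  rw [this]
  have h4 : ∑ c : J → Fin 2, ∑ c' : J → Fin 2, strM a c c' * strM b c' c
      = (starRingEnd ℂ) (∑ c : J → Fin 2, ∑ c' : J → Fin 2,
          (starRingEnd ℂ) (strM a c c') * strM b c c') := by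
    rw [map_sum]
    refine Finset.sum_congr rfl fun c _ => ?_
    rw [map_sum]
    refine Finset.sum_congr rfl fun c' _ => ?_
    rw [map_mul, Complex.conj_conj, strM_conj]
  rw [h4, strM_orth, apply_ite (starRingEnd ℂ), map_pow, map_ofNat, map_zero]

lemma strM_trace (a : J → Fin 4) :
    (strM a).trace = if a = 0 then (2 : ℂ) ^ Fintype.card J else 0 := by
  have h := strM_trace_mul a (0 : J → Fin 4)
  rw [strM_zero, mul_one] at h
  exact h

lemma strM_ne_zero (a : J → Fin 4) : strM a ≠ 0 := by
  intro h
  have h2 := strM_sq a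
  rw [h, zero_mul] at h2
  have := congrFun (congrFun h2 (fun _ => 0)) (fun _ => 0)
  simp [Matrix.one_apply] at this

lemma strM_exists_ne (a : J → Fin 4) : ∃ c c', strM a c c' ≠ 0 := by
  by_contra hc
  push_neg at hc
  exact strM_ne_zero a (by ext c c'; exact hc c c')

lemma strM_inj {a b : J → Fin 4} {μ : ℂ} (h : strM a = μ • strM b) : a = b := by
  by_contra hab
  have horth := strM_orth a b
  rw [if_neg hab] at horth
  have h2 : ∑ c : J → Fin 2, ∑ c' : J → Fin 2,
      (starRingEnd ℂ) (strM a c c') * strM a c c' = (starRingEnd ℂ) μ *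
        ∑ c : J → Fin 2, ∑ c' : J → Fin 2, (starRingEnd ℂ) (strM b c c') * strM a c c' := by
    rw [Finset.mul_sum]
    refine Finset.sum_congr rfl fun c _ => ?_
    rw [Finset.mul_sum]
    refine Finset.sum_congr rfl fun c' _ => ?_
    rw [h]
    simp only [Matrix.smul_apply, smul_eq_mul, map_mul]
    ring
  have h3 : ∑ c : J → Fin 2, ∑ c' : J → Fin 2,
      (starRingEnd ℂ) (strM b c c') * strM a c c' = 0 := by
    have := strM_orth b a
    rw [if_neg (Ne.symm hab)] at this
    exact this
  rw [h3, mul_zero, strM_orth, if_pos rfl] at h2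
  exact pow_ne_zero _ two_ne_zero h2

end STR
end SP
namespace SP

variable {I₁ I₂ : Type} [Fintype I₁] [Fintype I₂] [DecidableEq I₁] [DecidableEq I₂]

lemma pt_apply (a : I₁ ⊕ I₂ → Fin 4) (p q : Config I₁ I₂) :
    pauliTensor a p q = strM (a ∘ Sum.inl) p.1 q.1 * strM (a ∘ Sum.inr) p.2 q.2 := by
  simp only [pauliTensor, strM]
  rw [Fintype.prod_sum_type]
  rfl

lemma pt_elim_apply (x : I₁ → Fin 4) (y : I₂ → Fin 4) (p q : Config I₁ I₂) :
    pauliTensor (Sum.elim x y) p q = strM x p.1 q.1 * strM y p.2 q.2 := by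
  rw [pt_apply]; rfl

lemma elim_comp (a : I₁ ⊕ I₂ → Fin 4) : Sum.elim (a ∘ Sum.inl) (a ∘ Sum.inr) = a := by
  ext i; cases i <;> rfl

/-- tensor-form predicate -/
def TF (X : Matrix (Config I₁ I₂) (Config I₁ I₂) ℂ)
    (X₁ : Matrix (I₁ → Fin 2) (I₁ → Fin 2) ℂ) (X₂ : Matrix (I₂ → Fin 2) (I₂ → Fin 2) ℂ) :
    Prop :=
  ∀ p q : Config I₁ I₂, X p q = X₁ p.1 q.1 * X₂ p.2 q.2

lemma TF.mul {X Y : Matrix (Config I₁ I₂) (Config I₁ I₂) ℂ}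
    {X₁ Y₁ : Matrix (I₁ → Fin 2) (I₁ → Fin 2) ℂ}
    {X₂ Y₂ : Matrix (I₂ → Fin 2) (I₂ → Fin 2) ℂ}
    (hX : TF X X₁ X₂) (hY : TF Y Y₁ Y₂) :
    TF (X * Y) (X₁ * Y₁) (X₂ * Y₂) := by
  intro p q
  rw [Matrix.mul_apply, Matrix.mul_apply, Matrix.mul_apply]
  rw [Fintype.sum_prod_type]
  rw [Finset.sum_mul_sum]
  refine Finset.sum_congr rfl fun c _ => ?_
  refine Finset.sum_congr rfl fun d _ => ?_
  rw [hX, hY]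
  ring

lemma mat_exists_ne {m n : Type*} [Fintype m] [Fintype n] {X : Matrix m n ℂ}
    (h : X ≠ 0) : ∃ i j, X i j ≠ 0 := by
  by_contra hc
  push_neg at hc
  exact h (by ext i j; simpa using hc i j)

lemma tf_split {X : Matrix (Config I₁ I₂) (Config I₁ I₂) ℂ}
    {X₁ Y₁ : Matrix (I₁ → Fin 2) (I₁ → Fin 2) ℂ}
    {X₂ Y₂ : Matrix (I₂ → Fin 2) (I₂ → Fin 2) ℂ} (h1 : TF X X₁ X₂) (h2 : TF X Y₁ Y₂)
    (hX1 : X₁ ≠ 0) (hX2 : X₂ ≠ 0) : ∃ θ : ℂ, θ ≠ 0 ∧ Y₂ = θ • X₂ := by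
  obtain ⟨c₀, c₀', hc⟩ := mat_exists_ne hX1
  have key : ∀ d d', X₁ c₀ c₀' * X₂ d d' = Y₁ c₀ c₀' * Y₂ d d' := by
    intro d d'
    have := (h1 ((c₀, d)) ((c₀', d'))).symm.trans (h2 ((c₀, d)) ((c₀', d')))
    exact this
  set lam := Y₁ c₀ c₀' / X₁ c₀ c₀' with hlam
  have hX2eq : X₂ = lam • Y₂ := by
    ext d d'
    have := key d d'
    rw [Matrix.smul_apply, smul_eq_mul, hlam]
    field_simp
    linear_combination this
  have hlam_ne : lam ≠ 0 := by
    intro h0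
    rw [h0, zero_smul] at hX2eq
    exact hX2 hX2eq
  refine ⟨lam⁻¹, inv_ne_zero hlam_ne, ?_⟩
  rw [hX2eq, smul_smul, inv_mul_cancel₀ hlam_ne, one_smul]

lemma pt_orth (a b : I₁ ⊕ I₂ → Fin 4) :
    ∑ p : Config I₁ I₂, ∑ q : Config I₁ I₂,
      (starRingEnd ℂ) (pauliTensor a p q) * pauliTensor b p q
      = if a = b then (2 : ℂ) ^ (Fintype.card I₁ + Fintype.card I₂) else 0 := by
  have hsp : ∀ p q : Config I₁ I₂, (starRingEnd ℂ) (pauliTensor a p q) * pauliTensor b p q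
      = ((starRingEnd ℂ) (strM (a ∘ Sum.inl) p.1 q.1) * strM (b ∘ Sum.inl) p.1 q.1)
        * ((starRingEnd ℂ) (strM (a ∘ Sum.inr) p.2 q.2) * strM (b ∘ Sum.inr) p.2 q.2) := by
    intro p q
    rw [pt_apply, pt_apply, map_mul]
    ring
  simp_rw [hsp]
  rw [show (∑ p : Config I₁ I₂, ∑ q : Config I₁ I₂,
      ((starRingEnd ℂ) (strM (a ∘ Sum.inl) p.1 q.1) * strM (b ∘ Sum.inl) p.1 q.1)
        * ((starRingEnd ℂ) (strM (a ∘ Sum.inr) p.2 q.2) * strM (b ∘ Sum.inr) p.2 q.2))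
      = (∑ p1 : I₁ → Fin 2, ∑ q1 : I₁ → Fin 2,
          (starRingEnd ℂ) (strM (a ∘ Sum.inl) p1 q1) * strM (b ∘ Sum.inl) p1 q1)
        * (∑ p2 : I₂ → Fin 2, ∑ q2 : I₂ → Fin 2,
          (starRingEnd ℂ) (strM (a ∘ Sum.inr) p2 q2) * strM (b ∘ Sum.inr) p2 q2) from ?_]
  · rw [strM_orth, strM_orth]
    by_cases h : a = b
    · subst h
      rw [if_pos rfl, if_pos rfl, if_pos rfl, pow_add]
    · rw [if_neg h]
      have : ¬(a ∘ Sum.inl = b ∘ Sum.inl) ∨ ¬(a ∘ Sum.inr = b ∘ Sum.inr) := by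
        by_contra hc
        push_neg at hc
        apply h
        rw [← elim_comp a, ← elim_comp b, hc.1, hc.2]
      rcases this with h1 | h1
      · rw [if_neg h1, zero_mul]
      · rw [if_neg h1, mul_zero]
  · simp_rw [Fintype.sum_prod_type]
    rw [Finset.sum_mul_sum]
    refine Finset.sum_congr rfl fun p1 _ => Finset.sum_congr rfl fun p2 _ => ?_
    rw [Finset.sum_mul_sum]

lemma pt_unique {ε ε' : ℂ} {a b : I₁ ⊕ I₂ → Fin 4} (hε : ε ≠ 0)
    (h : ε • pauliTensor a = ε' • pauliTensor b) : a = b ∧ ε = ε' := by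
  have hfr : ∀ (μ : ℂ) (cmat : I₁ ⊕ I₂ → Fin 4),
      ∑ p : Config I₁ I₂, ∑ q : Config I₁ I₂,
        (starRingEnd ℂ) (pauliTensor a p q) * ((μ • pauliTensor cmat) p q)
      = μ * (if a = cmat then (2 : ℂ) ^ (Fintype.card I₁ + Fintype.card I₂) else 0) := by
    intro μ c
    have hpt : ∀ p q : Config I₁ I₂,
        (starRingEnd ℂ) (pauliTensor a p q) * ((μ • pauliTensor c) p q)
        = μ * ((starRingEnd ℂ) (pauliTensor a p q) * pauliTensor c p q) := by
      intro p q
      simp only [Matrix.smul_apply, smul_eq_mul]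
      ring
    simp_rw [hpt, ← Finset.mul_sum]
    rw [pt_orth]
  have h1 := hfr ε a
  rw [h, hfr ε' b, if_pos rfl] at h1
  by_cases hab : a = b
  · refine ⟨hab, ?_⟩
    rw [if_pos hab] at h1
    exact (mul_right_cancel₀ (pow_ne_zero _ two_ne_zero) h1).symm
  · rw [if_neg hab, mul_zero] at h1
    rcases mul_eq_zero.1 h1.symm with h3 | h3
    · exact absurd h3 hε
    · exact absurd h3 (pow_ne_zero _ two_ne_zero)

end SP
namespace SP

attribute [local instance] Classical.propDecidable

variable {I₁ I₂ : Type} [Fintype I₁] [Fintype I₂] [DecidableEq I₁] [DecidableEq I₂]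

def pEps (M : Matrix (Config I₁ I₂) (Config I₁ I₂) ℂ) : ℂ :=
  if h : IsPauli M then h.choose else 1

def pStr (M : Matrix (Config I₁ I₂) (Config I₁ I₂) ℂ) : I₁ ⊕ I₂ → Fin 4 :=
  if h : IsPauli M then h.choose_spec.choose else 0

lemma pdec {M : Matrix (Config I₁ I₂) (Config I₁ I₂) ℂ} (h : IsPauli M) :
    (pEps M = 1 ∨ pEps M = -1) ∧ M = pEps M • pauliTensor (pStr M) := by
  unfold pEps pStr
  rw [dif_pos h, dif_pos h]
  exact h.choose_spec.choose_spec

def aS (M : Matrix (Config I₁ I₂) (Config I₁ I₂) ℂ) : I₁ → Fin 4 := pStr M ∘ Sum.inl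
def bS (M : Matrix (Config I₁ I₂) (Config I₁ I₂) ℂ) : I₂ → Fin 4 := pStr M ∘ Sum.inr
def Am (M : Matrix (Config I₁ I₂) (Config I₁ I₂) ℂ) : Matrix (I₁ → Fin 2) (I₁ → Fin 2) ℂ :=
  strM (aS M)
def Bm (M : Matrix (Config I₁ I₂) (Config I₁ I₂) ℂ) : Matrix (I₂ → Fin 2) (I₂ → Fin 2) ℂ :=
  strM (bS M)

lemma eps_ne {M : Matrix (Config I₁ I₂) (Config I₁ I₂) ℂ} (h : IsPauli M) : pEps M ≠ 0 := by
  rcases (pdec h).1 with h1 | h1 <;> rw [h1] <;> norm_num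

lemma eps_conj {M : Matrix (Config I₁ I₂) (Config I₁ I₂) ℂ} (h : IsPauli M) :
    (starRingEnd ℂ) (pEps M) = pEps M := by
  rcases (pdec h).1 with h1 | h1 <;> rw [h1] <;> simp

lemma eps_sq {M : Matrix (Config I₁ I₂) (Config I₁ I₂) ℂ} (h : IsPauli M) :
    pEps M * pEps M = 1 := by
  rcases (pdec h).1 with h1 | h1 <;> rw [h1] <;> ring

lemma entry_eq {M : Matrix (Config I₁ I₂) (Config I₁ I₂) ℂ} (h : IsPauli M)
    (p q : Config I₁ I₂) : M p q = pEps M * (Am M p.1 q.1 * Bm M p.2 q.2) := by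
  conv_lhs => rw [(pdec h).2]
  rw [Matrix.smul_apply, pt_apply, smul_eq_mul]
  rfl

lemma M_tf {M : Matrix (Config I₁ I₂) (Config I₁ I₂) ℂ} (h : IsPauli M) :
    TF M (pEps M • Am M) (Bm M) := by
  intro p q
  rw [entry_eq h p q, Matrix.smul_apply, smul_eq_mul]
  ring

lemma pdec_unique {M : Matrix (Config I₁ I₂) (Config I₁ I₂) ℂ} (h : IsPauli M) {μ : ℂ}
    {cf : I₁ ⊕ I₂ → Fin 4} (hμ : μ ≠ 0) (he : M = μ • pauliTensor cf) :
    pStr M = cf ∧ pEps M = μ := by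
  have h2 := (pdec h).2
  have := pt_unique hμ (he.symm.trans h2)
  exact ⟨this.1.symm, this.2.symm⟩

lemma tf_to_pt {X : Matrix (Config I₁ I₂) (Config I₁ I₂) ℂ} {μ ν : ℂ}
    {x : I₁ → Fin 4} {y : I₂ → Fin 4} (h : TF X (μ • strM x) (ν • strM y)) :
    X = (μ * ν) • pauliTensor (Sum.elim x y) := by
  ext p q
  rw [h p q]
  simp only [Matrix.smul_apply, smul_eq_mul, pt_elim_apply]
  ring

lemma pt_zero : pauliTensor (0 : I₁ ⊕ I₂ → Fin 4) = 1 := by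
  ext p q
  rw [show (0 : I₁ ⊕ I₂ → Fin 4) = Sum.elim (0 : I₁ → Fin 4) (0 : I₂ → Fin 4) by
    ext i; cases i <;> rfl]
  rw [pt_elim_apply, strM_zero, strM_zero]
  rcases p with ⟨p1, p2⟩
  rcases q with ⟨q1, q2⟩
  by_cases h1 : p1 = q1 <;> by_cases h2 : p2 = q2 <;>
    simp [Matrix.one_apply, Prod.ext_iff, h1, h2]

lemma isPauli_one : IsPauli (1 : Matrix (Config I₁ I₂) (Config I₁ I₂) ℂ) :=
  ⟨1, 0, Or.inl rfl, by rw [pt_zero, one_smul]⟩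

lemma str_one : pStr (1 : Matrix (Config I₁ I₂) (Config I₁ I₂) ℂ) = 0 ∧
    pEps (1 : Matrix (Config I₁ I₂) (Config I₁ I₂) ℂ) = 1 :=
  pdec_unique isPauli_one one_ne_zero (by rw [pt_zero, one_smul])

section Gr

variable (G : StabilizerGroup I₁ I₂)

lemma mul_decomp {g h : Matrix (Config I₁ I₂) (Config I₁ I₂) ℂ}
    (hg : g ∈ G.carrier) (hh : h ∈ G.carrier) :
    pStr (g * h) = Sum.elim (fun i => SP.pm (aS g i) (aS h i)) (fun i => SP.pm (bS g i) (bS h i))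
    ∧ pEps (g * h) = pEps g * pEps h * strP (aS g) (aS h) * strP (bS g) (bS h) := by
  have hPg := G.isPauli g hg
  have hPh := G.isPauli h hh
  have htf := TF.mul (M_tf hPg) (M_tf hPh)
  have hA : (pEps g • Am g) * (pEps h • Am h)
      = ((pEps g * pEps h) * strP (aS g) (aS h)) • strM (fun i => SP.pm (aS g i) (aS h i)) := by
    rw [Matrix.smul_mul, Matrix.mul_smul]
    rw [show Am g * Am h = strP (aS g) (aS h) • strM (fun i => SP.pm (aS g i) (aS h i)) from
      strM_mul _ _]
    rw [smul_smul, smul_smul]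
  have hB : Bm g * Bm h = strP (bS g) (bS h) • strM (fun i => SP.pm (bS g i) (bS h i)) :=
    strM_mul _ _
  rw [hA, hB] at htf
  have hgh := tf_to_pt htf
  have hne : (pEps g * pEps h * strP (aS g) (aS h)) * strP (bS g) (bS h) ≠ 0 := by
    have := eps_ne hPg
    have := eps_ne hPh
    have := strP_ne (aS g) (aS h)
    have := strP_ne (bS g) (bS h)
    positivity
  have := pdec_unique (G.isPauli _ (G.mul_mem g hg h hh)) hne hgh
  exact ⟨this.1, by rw [this.2]⟩

lemma aS_mul {g h : Matrix (Config I₁ I₂) (Config I₁ I₂) ℂ}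
    (hg : g ∈ G.carrier) (hh : h ∈ G.carrier) :
    aS (g * h) = fun i => SP.pm (aS g i) (aS h i) := by
  have := (mul_decomp G hg hh).1
  funext i
  exact congrFun (congrArg (fun f => f ∘ Sum.inl) this) i

lemma bS_mul {g h : Matrix (Config I₁ I₂) (Config I₁ I₂) ℂ}
    (hg : g ∈ G.carrier) (hh : h ∈ G.carrier) :
    bS (g * h) = fun i => SP.pm (bS g i) (bS h i) := by
  have := (mul_decomp G hg hh).1
  funext i
  exact congrFun (congrArg (fun f => f ∘ Sum.inr) this) i

lemma g_cancel {g h : Matrix (Config I₁ I₂) (Config I₁ I₂) ℂ}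
    (hg : g ∈ G.carrier) : g * (g * h) = h := by
  rw [← mul_assoc, G.sq_eq_one g hg, one_mul]

/-- squared tensor part is one -/
lemma pt_str_sq {h : Matrix (Config I₁ I₂) (Config I₁ I₂) ℂ} (hh : h ∈ G.carrier) :
    pauliTensor (pStr h) * pauliTensor (pStr h)
      = (1 : Matrix (Config I₁ I₂) (Config I₁ I₂) ℂ) := by
  have hPh := G.isPauli h hh
  have hd := (pdec hPh).2
  have hsq := G.sq_eq_one h hh
  rw [hd, Matrix.smul_mul, Matrix.mul_smul, smul_smul, eps_sq hPh, one_smul] at hsq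
  exact hsq

/-- two elements of the group with the same string are equal -/
lemma str_inj {g h : Matrix (Config I₁ I₂) (Config I₁ I₂) ℂ}
    (hg : g ∈ G.carrier) (hh : h ∈ G.carrier) (hs : pStr g = pStr h) : g = h := by
  have hPg := G.isPauli g hg
  have hPh := G.isPauli h hh
  by_cases he : pEps g = pEps h
  · rw [(pdec hPg).2, (pdec hPh).2, hs, he]
  · exfalso
    have hm1 : pEps g * pEps h = -1 := by
      rcases (pdec hPg).1 with a | a <;> rcases (pdec hPh).1 with b | b <;>
        first
          | (exact absurd (a.trans b.symm) he)
          | (rw [a, b]; ring)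
    have hgh : g * h = -1 := by
      rw [(pdec hPg).2, (pdec hPh).2, hs, Matrix.smul_mul, Matrix.mul_smul, smul_smul,
        pt_str_sq G hh, hm1, neg_smul, one_smul]
    exact G.neg_one_not_mem (hgh ▸ G.mul_mem g hg h hh)

end Gr
end SP
namespace SP

variable {I₁ I₂ : Type} [Fintype I₁] [Fintype I₂] [DecidableEq I₁] [DecidableEq I₂]

lemma pm_eq_zero_iff (a b : Fin 4) : SP.pm a b = 0 ↔ a = b := by revert a b; decide

lemma pph_zero_right (a : Fin 4) : pph a 0 = 1 := by fin_cases a <;> rfl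

lemma pph_cancel (a b : Fin 4) : pph a b * pph a (pm a b) = 1 := by
  fin_cases a <;> fin_cases b <;>
    simp [pph, pm] <;> norm_num [Complex.I_mul_I]

variable {J : Type} [Fintype J] [DecidableEq J]

lemma strP_zero_right (b : J → Fin 4) : strP b 0 = 1 :=
  Finset.prod_eq_one fun j _ => pph_zero_right _

lemma strP_cancel (x y : J → Fin 4) :
    strP x y * strP x (fun j => pm (x j) (y j)) = 1 := by
  rw [strP, strP, ← Finset.prod_mul_distrib]
  exact Finset.prod_eq_one fun j _ => pph_cancel _ _

section Gr2

variable (G : StabilizerGroup I₁ I₂)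

def F1 : Finset (Matrix (Config I₁ I₂) (Config I₁ I₂) ℂ) :=
  G.carrier.filter (fun v => bS v = 0)

def F2 : Finset (Matrix (Config I₁ I₂) (Config I₁ I₂) ℂ) :=
  G.carrier.filter (fun v => aS v = 0)

lemma mem_F1 {v : Matrix (Config I₁ I₂) (Config I₁ I₂) ℂ} :
    v ∈ F1 G ↔ v ∈ G.carrier ∧ bS v = 0 := Finset.mem_filter

lemma mem_F2 {v : Matrix (Config I₁ I₂) (Config I₁ I₂) ℂ} :
    v ∈ F2 G ↔ v ∈ G.carrier ∧ aS v = 0 := Finset.mem_filter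

lemma F1_coe : {g | g ∈ G.carrier ∧ SupportedIn1 g} = ↑(F1 G) := by
  ext g
  simp only [Set.mem_setOf_eq, Finset.coe_filter, F1, mem_F1]
  constructor
  · rintro ⟨hg, ε, a, hε, hga, ha⟩
    refine ⟨hg, ?_⟩
    have hεne : ε ≠ 0 := by rcases hε with h | h <;> rw [h] <;> norm_num
    have := pdec_unique (G.isPauli g hg) hεne hga
    funext i
    rw [bS, Function.comp_apply, this.1]
    exact ha i
  · rintro ⟨hg, hb⟩
    exact ⟨hg, pEps g, pStr g, (pdec (G.isPauli g hg)).1, (pdec (G.isPauli g hg)).2,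
      fun i => congrFun hb i⟩

lemma F2_coe : {g | g ∈ G.carrier ∧ SupportedIn2 g} = ↑(F2 G) := by
  ext g
  simp only [Set.mem_setOf_eq, Finset.coe_filter, F2, mem_F2]
  constructor
  · rintro ⟨hg, ε, a, hε, hga, ha⟩
    refine ⟨hg, ?_⟩
    have hεne : ε ≠ 0 := by rcases hε with h | h <;> rw [h] <;> norm_num
    have := pdec_unique (G.isPauli g hg) hεne hga
    funext i
    rw [aS, Function.comp_apply, this.1]
    exact ha i
  · rintro ⟨hg, hb⟩
    exact ⟨hg, pEps g, pStr g, (pdec (G.isPauli g hg)).1, (pdec (G.isPauli g hg)).2,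
      fun i => congrFun hb i⟩

lemma aS_one : aS (1 : Matrix (Config I₁ I₂) (Config I₁ I₂) ℂ) = 0 := by
  funext i; rw [aS, Function.comp_apply, str_one.1]; rfl

lemma bS_one : bS (1 : Matrix (Config I₁ I₂) (Config I₁ I₂) ℂ) = 0 := by
  funext i; rw [bS, Function.comp_apply, str_one.1]; rfl

lemma one_mem_F2 : (1 : Matrix (Config I₁ I₂) (Config I₁ I₂) ℂ) ∈ F2 G :=
  mem_F2 G |>.2 ⟨G.one_mem, aS_one⟩

lemma F2_mul_mem {s s' : Matrix (Config I₁ I₂) (Config I₁ I₂) ℂ}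
    (hs : s ∈ F2 G) (hs' : s' ∈ F2 G) : s * s' ∈ F2 G := by
  obtain ⟨hs1, hs2⟩ := mem_F2 G |>.1 hs
  obtain ⟨hs1', hs2'⟩ := mem_F2 G |>.1 hs'
  refine mem_F2 G |>.2 ⟨G.mul_mem s hs1 s' hs1', ?_⟩
  rw [aS_mul G hs1 hs1', hs2, hs2']
  funext i
  exact SP.pm_self 0

/-- uniqueness of an F2 element with prescribed string on I₂ -/
lemma F2_bS_inj {s s' : Matrix (Config I₁ I₂) (Config I₁ I₂) ℂ}
    (hs : s ∈ F2 G) (hs' : s' ∈ F2 G) (hb : bS s = bS s') : s = s' := by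
  obtain ⟨hs1, hs2⟩ := mem_F2 G |>.1 hs
  obtain ⟨hs1', hs2'⟩ := mem_F2 G |>.1 hs'
  refine str_inj G hs1 hs1' ?_
  rw [← elim_comp (pStr s), ← elim_comp (pStr s')]
  show Sum.elim (aS s) (bS s) = Sum.elim (aS s') (bS s')
  rw [hs2, hs2', hb]

/-- canonical second-factor matrix of an element of `F2` -/
def Q (s : Matrix (Config I₁ I₂) (Config I₁ I₂) ℂ) : Matrix (I₂ → Fin 2) (I₂ → Fin 2) ℂ :=
  pEps s • Bm s

lemma Q_mul {s s' : Matrix (Config I₁ I₂) (Config I₁ I₂) ℂ}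
    (hs : s ∈ F2 G) (hs' : s' ∈ F2 G) : Q s * Q s' = Q (s * s') := by
  obtain ⟨hs1, hs2⟩ := mem_F2 G |>.1 hs
  obtain ⟨hs1', hs2'⟩ := mem_F2 G |>.1 hs'
  rw [Q, Q, Q, Matrix.smul_mul, Matrix.mul_smul, smul_smul]
  rw [show Bm s * Bm s' = strP (bS s) (bS s') • strM (fun i => SP.pm (bS s i) (bS s' i)) from
    strM_mul _ _]
  rw [(mul_decomp G hs1 hs1').2]
  rw [show Bm (s * s') = strM (fun i => SP.pm (bS s i) (bS s' i)) by
    rw [Bm, bS_mul G hs1 hs1']]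
  rw [smul_smul]
  congr 1
  rw [hs2, hs2']
  rw [show strP (0 : I₁ → Fin 4) 0 = 1 from Finset.prod_eq_one fun j _ => rfl]
  ring

def P2 : Matrix (I₂ → Fin 2) (I₂ → Fin 2) ℂ := ∑ s ∈ F2 G, Q s

lemma Q_mul_P2 {s : Matrix (Config I₁ I₂) (Config I₁ I₂) ℂ} (hs : s ∈ F2 G) :
    Q s * P2 G = P2 G := by
  rw [P2, Finset.mul_sum]
  rw [show ∑ s' ∈ F2 G, Q s * Q s' = ∑ s' ∈ F2 G, Q (s * s') from
    Finset.sum_congr rfl fun s' hs' => Q_mul G hs hs']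
  exact Finset.sum_nbij' (fun s' => s * s') (fun s'' => s * s'')
    (fun s' hs' => F2_mul_mem G hs hs')
    (fun s'' hs'' => F2_mul_mem G hs hs'')
    (fun s' hs' => g_cancel G ((mem_F2 G |>.1 hs).1))
    (fun s'' hs'' => g_cancel G ((mem_F2 G |>.1 hs).1))
    (fun s' hs' => rfl)

lemma Bm_mul_P2 {s : Matrix (Config I₁ I₂) (Config I₁ I₂) ℂ} (hs : s ∈ F2 G) :
    Bm s * P2 G = pEps s • P2 G := by
  have hP : IsPauli s := G.isPauli s (mem_F2 G |>.1 hs).1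
  have : Bm s = pEps s • Q s := by
    rw [Q, smul_smul, eps_sq hP, one_smul]
  rw [this, Matrix.smul_mul, Q_mul_P2 G hs]

end Gr2
end SP
namespace SP

variable {I₁ I₂ : Type} [Fintype I₁] [Fintype I₂] [DecidableEq I₁] [DecidableEq I₂]

lemma pph_self' (a : Fin 4) : pph a a = 1 := pph_self a

lemma strP_self {J : Type} [Fintype J] [DecidableEq J] (a : J → Fin 4) : strP a a = 1 :=
  Finset.prod_eq_one fun j _ => pph_self _

lemma Am_conj (g : Matrix (Config I₁ I₂) (Config I₁ I₂) ℂ) (x y : I₁ → Fin 2) :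
    (starRingEnd ℂ) (Am g x y) = Am g y x := strM_conj _ _ _

lemma Bm_conj (g : Matrix (Config I₁ I₂) (Config I₁ I₂) ℂ) (x y : I₂ → Fin 2) :
    (starRingEnd ℂ) (Bm g x y) = Bm g y x := strM_conj _ _ _

section Star

variable (G : StabilizerGroup I₁ I₂)

lemma matched_Bm {g h : Matrix (Config I₁ I₂) (Config I₁ I₂) ℂ}
    (hg : g ∈ G.carrier) (hh : h ∈ G.carrier) (hab : aS g = aS h) :
    (pEps g * pEps h) • Bm h = Bm g * Q (g * h) := by
  rw [Q, Matrix.mul_smul]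
  rw [show Bm g * Bm (g * h) = strP (bS g) (bS (g * h)) •
      strM (fun i => SP.pm (bS g i) (bS (g * h) i)) from strM_mul _ _]
  have hbgh : bS (g * h) = fun i => SP.pm (bS g i) (bS h i) := bS_mul G hg hh
  have hstr : (fun i => SP.pm (bS g i) (bS (g * h) i)) = bS h := by
    funext i
    rw [hbgh]
    exact SP.pm_cancel _ _
  rw [hstr, smul_smul]
  show _ = (pEps (g * h) * strP (bS g) (bS (g * h))) • Bm h
  congr 1
  rw [(mul_decomp G hg hh).2, hab, strP_self, hbgh]
  have hc : strP (bS g) (bS h) * strP (bS g) (fun i => SP.pm (bS g i) (bS h i)) = 1 :=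
    strP_cancel _ _
  linear_combination (-(pEps g * pEps h)) * hc

/-- the basic rank-one-ish building block -/
def Vm (g : Matrix (Config I₁ I₂) (Config I₁ I₂) ℂ) :
    Matrix ((I₂ → Fin 2) × (I₂ → Fin 2)) ((I₂ → Fin 2) × (I₂ → Fin 2)) ℂ :=
  fun q q' => Bm g q.2 q.1 * (Bm g * P2 G) q'.1 q'.2

lemma pair_sum {g h : Matrix (Config I₁ I₂) (Config I₁ I₂) ℂ}
    (hg : g ∈ G.carrier) (hh : h ∈ G.carrier)
    (q q' : (I₂ → Fin 2) × (I₂ → Fin 2)) :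
    ∑ p : (I₁ → Fin 2) × (I₁ → Fin 2),
      star (g (p.1, q.1) (p.2, q.2)) * h (p.1, q'.1) (p.2, q'.2)
    = (if aS g = aS h then (2 : ℂ) ^ Fintype.card I₁ else 0) *
        (pEps g * pEps h * (Bm g q.2 q.1 * Bm h q'.1 q'.2)) := by
  have hPg := G.isPauli g hg
  have hPh := G.isPauli h hh
  have hterm : ∀ p : (I₁ → Fin 2) × (I₁ → Fin 2),
      star (g (p.1, q.1) (p.2, q.2)) * h (p.1, q'.1) (p.2, q'.2)
      = (Am g p.2 p.1 * Am h p.1 p.2) *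
          (pEps g * pEps h * (Bm g q.2 q.1 * Bm h q'.1 q'.2)) := by
    intro p
    rw [entry_eq hPg, entry_eq hPh]
    show (starRingEnd ℂ) _ * _ = _
    rw [map_mul, map_mul, eps_conj hPg, Am_conj, Bm_conj]
    ring
  simp_rw [hterm, ← Finset.sum_mul]
  congr 1
  rw [Fintype.sum_prod_type]
  have h2 : ∀ x y : I₁ → Fin 2, Am g y x * Am h x y
      = (starRingEnd ℂ) (Am g x y) * Am h x y := by
    intro x y
    rw [Am_conj]
  simp_rw [h2]
  exact strM_orth (aS g) (aS h)

lemma inner_reindex {g : Matrix (Config I₁ I₂) (Config I₁ I₂) ℂ}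
    (hg : g ∈ G.carrier) (q q' : (I₂ → Fin 2) × (I₂ → Fin 2)) :
    ∑ h ∈ G.carrier,
      (if aS g = aS h then (2 : ℂ) ^ Fintype.card I₁ else 0) *
        (pEps g * pEps h * (Bm g q.2 q.1 * Bm h q'.1 q'.2))
    = (2 : ℂ) ^ Fintype.card I₁ * Vm G g q q' := by
  have hsplit : ∀ h, (if aS g = aS h then (2 : ℂ) ^ Fintype.card I₁ else 0) *
        (pEps g * pEps h * (Bm g q.2 q.1 * Bm h q'.1 q'.2))
      = if aS g = aS h then (2 : ℂ) ^ Fintype.card I₁ *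
          (Bm g q.2 q.1 * (((pEps g * pEps h) • Bm h) q'.1 q'.2)) else 0 := by
    intro h
    split
    · rw [Matrix.smul_apply, smul_eq_mul]; ring
    · rw [zero_mul]
  simp_rw [hsplit]
  rw [← Finset.sum_filter]
  have hval : ∀ h ∈ G.carrier.filter (fun h => aS g = aS h),
      (2 : ℂ) ^ Fintype.card I₁ * (Bm g q.2 q.1 * (((pEps g * pEps h) • Bm h) q'.1 q'.2))
      = (2 : ℂ) ^ Fintype.card I₁ * (Bm g q.2 q.1 * ((Bm g * Q (g * h)) q'.1 q'.2)) := by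
    intro h hh
    obtain ⟨hh1, hh2⟩ := Finset.mem_filter.1 hh
    rw [matched_Bm G hg hh1 hh2]
  rw [Finset.sum_congr rfl hval]
  have hre : ∑ h ∈ G.carrier.filter (fun h => aS g = aS h),
      (2 : ℂ) ^ Fintype.card I₁ * (Bm g q.2 q.1 * ((Bm g * Q (g * h)) q'.1 q'.2))
      = ∑ s ∈ F2 G,
      (2 : ℂ) ^ Fintype.card I₁ * (Bm g q.2 q.1 * ((Bm g * Q s) q'.1 q'.2)) := by
    refine Finset.sum_nbij' (i := fun h => g * h) (j := fun s => g * s)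
      (fun h hh => by
        obtain ⟨hh1, hh2⟩ := Finset.mem_filter.1 hh
        refine (mem_F2 G).2 ⟨G.mul_mem g hg h hh1, ?_⟩
        rw [aS_mul G hg hh1, ← hh2]
        funext i
        exact SP.pm_self _)
      (fun s hs => by
        obtain ⟨hs1, hs2⟩ := (mem_F2 G).1 hs
        refine Finset.mem_filter.2 ⟨G.mul_mem g hg s hs1, ?_⟩
        rw [aS_mul G hg hs1, hs2]
        funext i
        exact (SP.pm_zero _).symm)
      (fun h hh => g_cancel G hg)
      (fun s hs => g_cancel G hg)
      (fun h hh => rfl)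
  rw [hre, ← Finset.mul_sum]
  congr 1
  rw [Vm, ← Finset.mul_sum]
  congr 1
  rw [P2, Matrix.mul_sum, Matrix.sum_apply]

lemma star_rep :
    (realign (stabDensity G))ᴴ * realign (stabDensity G)
      = ((((2 : ℂ) ^ (Fintype.card I₁ + Fintype.card I₂))⁻¹) ^ 2 *
          (2 : ℂ) ^ Fintype.card I₁) • ∑ g ∈ G.carrier, Vm G g := by
  ext q q'
  rw [Matrix.mul_apply]
  set c₀ : ℂ := ((2 : ℂ) ^ (Fintype.card I₁ + Fintype.card I₂))⁻¹ with hc₀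
  have hR : ∀ (p : (I₁ → Fin 2) × (I₁ → Fin 2)) (r : (I₂ → Fin 2) × (I₂ → Fin 2)),
      realign (stabDensity G) p r = c₀ * ∑ g ∈ G.carrier, g (p.1, r.1) (p.2, r.2) := by
    intro p r
    show stabDensity G (p.1, r.1) (p.2, r.2) = _
    rw [stabDensity, Matrix.smul_apply, Matrix.sum_apply, smul_eq_mul]
  have hstar : star c₀ = c₀ := by
    rw [hc₀, star_inv₀, star_pow, star_ofNat]
  have e1 : ∀ p : (I₁ → Fin 2) × (I₁ → Fin 2),
      (realign (stabDensity G))ᴴ q p * realign (stabDensity G) p q'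
      = c₀ ^ 2 * ∑ g ∈ G.carrier, ∑ h ∈ G.carrier,
          star (g (p.1, q.1) (p.2, q.2)) * h (p.1, q'.1) (p.2, q'.2) := by
    intro p
    rw [Matrix.conjTranspose_apply, hR p q, hR p q', star_mul', hstar, star_sum,
      mul_mul_mul_comm, Finset.sum_mul_sum, pow_two]
  have e2 : ∀ g ∈ G.carrier,
      (∑ h ∈ G.carrier, ∑ p : (I₁ → Fin 2) × (I₁ → Fin 2),
        star (g (p.1, q.1) (p.2, q.2)) * h (p.1, q'.1) (p.2, q'.2))
      = (2 : ℂ) ^ Fintype.card I₁ * Vm G g q q' := by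
    intro g hg
    have := fun h (hh : h ∈ G.carrier) => pair_sum G hg hh q q'
    rw [Finset.sum_congr rfl this]
    exact inner_reindex G hg q q'
  have e3 : ∀ g ∈ G.carrier,
      (∑ p : (I₁ → Fin 2) × (I₁ → Fin 2), ∑ h ∈ G.carrier,
        star (g (p.1, q.1) (p.2, q.2)) * h (p.1, q'.1) (p.2, q'.2))
      = (2 : ℂ) ^ Fintype.card I₁ * Vm G g q q' := by
    intro g hg
    rw [Finset.sum_comm]
    exact e2 g hg
  calc (∑ p : (I₁ → Fin 2) × (I₁ → Fin 2),
        (realign (stabDensity G))ᴴ q p * realign (stabDensity G) p q')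
      = c₀ ^ 2 * ∑ p : (I₁ → Fin 2) × (I₁ → Fin 2), ∑ g ∈ G.carrier, ∑ h ∈ G.carrier,
          star (g (p.1, q.1) (p.2, q.2)) * h (p.1, q'.1) (p.2, q'.2) := by
        simp_rw [e1]
        rw [← Finset.mul_sum]
    _ = c₀ ^ 2 * ∑ g ∈ G.carrier, ∑ p : (I₁ → Fin 2) × (I₁ → Fin 2), ∑ h ∈ G.carrier,
          star (g (p.1, q.1) (p.2, q.2)) * h (p.1, q'.1) (p.2, q'.2) := by
        rw [Finset.sum_comm]
    _ = c₀ ^ 2 * ∑ g ∈ G.carrier, (2 : ℂ) ^ Fintype.card I₁ * Vm G g q q' := by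
        rw [Finset.sum_congr rfl e3]
    _ = ((c₀ ^ 2 * (2 : ℂ) ^ Fintype.card I₁) • ∑ g ∈ G.carrier, Vm G g) q q' := by
        rw [Matrix.smul_apply, Matrix.sum_apply, smul_eq_mul, Finset.mul_sum, Finset.mul_sum]
        exact Finset.sum_congr rfl fun g _ => by ring

end Star
end SP
namespace SP

variable {I₁ I₂ : Type} [Fintype I₁] [Fintype I₂] [DecidableEq I₁] [DecidableEq I₂]

section IL

variable (G : StabilizerGroup I₁ I₂)

def Dq (g g' : Matrix (Config I₁ I₂) (Config I₁ I₂) ℂ) : ℂ :=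
  Matrix.trace (Bm g * P2 G * Bm g')

lemma Dq_expand (g g' : Matrix (Config I₁ I₂) (Config I₁ I₂) ℂ) :
    Dq G g g' = ∑ s' ∈ F2 G, pEps s' * (strP (bS g) (bS s') *
      (if (fun i => SP.pm (bS g i) (bS s' i)) = bS g'
        then (2 : ℂ) ^ Fintype.card I₂ else 0)) := by
  rw [Dq, P2, Finset.mul_sum, Finset.sum_mul, Matrix.trace_sum]
  refine Finset.sum_congr rfl fun s' hs' => ?_
  rw [Q, Matrix.mul_smul, Matrix.smul_mul, Matrix.trace_smul, smul_eq_mul]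
  congr 1
  rw [show Bm g * Bm s' = strP (bS g) (bS s') •
      strM (fun i => SP.pm (bS g i) (bS s' i)) from strM_mul _ _]
  rw [Matrix.smul_mul, Matrix.trace_smul, smul_eq_mul]
  congr 1
  exact strM_trace_mul _ _

lemma witness_string {g g' s : Matrix (Config I₁ I₂) (Config I₁ I₂) ℂ}
    (hbs : bS s = fun i => SP.pm (bS g i) (bS g' i)) :
    (fun i => SP.pm (bS g i) (bS s i)) = bS g' := by
  funext i
  rw [hbs]
  exact SP.pm_cancel _ _

lemma Dq_val {g g' s : Matrix (Config I₁ I₂) (Config I₁ I₂) ℂ}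
    (hs : s ∈ F2 G)
    (hbs : bS s = fun i => SP.pm (bS g i) (bS g' i)) :
    Dq G g g' = pEps s * (strP (bS g) (bS s) * (2 : ℂ) ^ Fintype.card I₂) := by
  rw [Dq_expand]
  rw [Finset.sum_eq_single_of_mem s hs]
  · rw [if_pos (witness_string hbs)]
  · intro s' hs' hne
    rw [if_neg, mul_zero, mul_zero]
    intro hcond
    apply hne
    refine F2_bS_inj G hs' hs ?_
    rw [hbs]
    funext i
    have := congrFun hcond i
    rw [← this]
    exact (SP.pm_cancel _ _).symm

lemma Dq_zero {g g' : Matrix (Config I₁ I₂) (Config I₁ I₂) ℂ}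
    (hnc : ¬ ∃ s ∈ F2 G, bS s = fun i => SP.pm (bS g i) (bS g' i)) :
    Dq G g g' = 0 := by
  rw [Dq_expand]
  refine Finset.sum_eq_zero fun s' hs' => ?_
  rw [if_neg, mul_zero, mul_zero]
  intro hcond
  exact hnc ⟨s', hs', by
    funext i
    have := congrFun hcond i
    rw [← this]
    exact (SP.pm_cancel _ _).symm⟩

lemma Bm_rel {g g' s : Matrix (Config I₁ I₂) (Config I₁ I₂) ℂ}
    (hbs : bS s = fun i => SP.pm (bS g i) (bS g' i)) :
    Bm g * Bm s = strP (bS g) (bS s) • Bm g' := by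
  rw [show Bm g * Bm s = strP (bS g) (bS s) •
      strM (fun i => SP.pm (bS g i) (bS s i)) from strM_mul _ _]
  rw [witness_string hbs]
  rfl

lemma IL_one {g g' s : Matrix (Config I₁ I₂) (Config I₁ I₂) ℂ}
    (hs : s ∈ F2 G)
    (hbs : bS s = fun i => SP.pm (bS g i) (bS g' i)) :
    Dq G g g' • (Bm g' * P2 G) = ((2 : ℂ) ^ Fintype.card I₂) • (Bm g * P2 G) := by
  have hsP : IsPauli s := G.isPauli s ((mem_F2 G).1 hs).1
  set θ : ℂ := strP (bS g) (bS s) with hθ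
  have hθne : θ ≠ 0 := strP_ne _ _
  have hrel : Bm g' = θ⁻¹ • (Bm g * Bm s) := by
    rw [Bm_rel hbs, smul_smul, inv_mul_cancel₀ hθne, one_smul]
  have hBP : Bm g' * P2 G = (θ⁻¹ * pEps s) • (Bm g * P2 G) := by
    rw [hrel, Matrix.smul_mul, mul_assoc, Bm_mul_P2 G hs, Matrix.mul_smul, smul_smul]
  rw [hBP, Dq_val G hs hbs, smul_smul, ← hθ]
  congr 1
  have he := eps_sq hsP
  field_simp
  linear_combination he

lemma count_lemma {g : Matrix (Config I₁ I₂) (Config I₁ I₂) ℂ} (hg : g ∈ G.carrier) :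
    (G.carrier.filter
        (fun g' => ∃ s ∈ F2 G, bS s = fun i => SP.pm (bS g i) (bS g' i))).card
      = (F2 G).card * (F1 G).card := by
  rw [← Finset.card_product]
  symm
  refine Finset.card_bij (fun p _ => g * p.1 * p.2) ?hi ?inj ?surj
  · rintro ⟨s, u⟩ hp
    rw [Finset.mem_product] at hp
    obtain ⟨hs, hu⟩ := hp
    obtain ⟨hs1, hs2⟩ := (mem_F2 G).1 hs
    obtain ⟨hu1, hu2⟩ := (mem_F1 G).1 hu
    refine Finset.mem_filter.2 ⟨G.mul_mem _ (G.mul_mem g hg s hs1) u hu1, s, hs, ?_⟩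
    have hb : bS (g * s * u) = fun i => SP.pm (bS g i) (bS s i) := by
      rw [bS_mul G (G.mul_mem g hg s hs1) hu1, bS_mul G hg hs1, hu2]
      funext i
      exact SP.pm_zero _
    rw [hb]
    funext i
    exact (SP.pm_cancel _ _).symm
  · rintro ⟨s, u⟩ hp ⟨s', u'⟩ hp' heq
    rw [Finset.mem_product] at hp hp'
    obtain ⟨hs, hu⟩ := hp
    obtain ⟨hs', hu'⟩ := hp'
    obtain ⟨hs1, hs2⟩ := (mem_F2 G).1 hs
    obtain ⟨hu1, hu2⟩ := (mem_F1 G).1 hu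
    obtain ⟨hs1', hs2'⟩ := (mem_F2 G).1 hs'
    obtain ⟨hu1', hu2'⟩ := (mem_F1 G).1 hu'
    have h1 : s * u = s' * u' := by
      have this : g * s * u = g * s' * u' := heq
      rw [mul_assoc, mul_assoc] at this
      have h2 := congrArg (fun x => g * x) this
      rwa [g_cancel G hg, g_cancel G hg] at h2
    have hbss : bS s = bS s' := by
      have hb1 : bS (s * u) = bS s := by
        rw [bS_mul G hs1 hu1, hu2]
        funext i
        exact SP.pm_zero _
      have hb2 : bS (s' * u') = bS s' := by
        rw [bS_mul G hs1' hu1', hu2']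
        funext i
        exact SP.pm_zero _
      rw [← hb1, ← hb2, h1]
    have hss : s = s' := F2_bS_inj G hs hs' hbss
    have huu : u = u' := by
      have := h1
      rw [hss] at this
      have h3 := congrArg (fun x => s' * x) this
      rwa [g_cancel G hs1', g_cancel G hs1'] at h3
    rw [Prod.ext_iff]
    exact ⟨hss, huu⟩
  · intro g' hg'
    obtain ⟨hg'1, s, hs, hbs⟩ := Finset.mem_filter.1 hg'
    obtain ⟨hs1, hs2⟩ := (mem_F2 G).1 hs
    have hgs : g * s ∈ G.carrier := G.mul_mem g hg s hs1
    refine ⟨(s, (g * s) * g'), ?_, ?_⟩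
    · rw [Finset.mem_product]
      refine ⟨hs, (mem_F1 G).2 ⟨G.mul_mem _ hgs g' hg'1, ?_⟩⟩
      rw [bS_mul G hgs hg'1, bS_mul G hg hs1]
      funext i
      rw [hbs]
      simp only
      rw [SP.pm_cancel]
      exact SP.pm_self _
    · show g * s * ((g * s) * g') = g'
      exact g_cancel G hgs

lemma IL {g : Matrix (Config I₁ I₂) (Config I₁ I₂) ℂ} (hg : g ∈ G.carrier) :
    ∑ g' ∈ G.carrier, Dq G g g' • (Bm g' * P2 G)
      = ((((F2 G).card * (F1 G).card : ℕ) : ℂ) * (2 : ℂ) ^ Fintype.card I₂) •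
          (Bm g * P2 G) := by
  classical
  rw [← Finset.sum_filter_add_sum_filter_not G.carrier
    (fun g' => ∃ s ∈ F2 G, bS s = fun i => SP.pm (bS g i) (bS g' i))]
  have hz : ∑ g' ∈ G.carrier.filter
      (fun g' => ¬ ∃ s ∈ F2 G, bS s = fun i => SP.pm (bS g i) (bS g' i)),
      Dq G g g' • (Bm g' * P2 G) = 0 := by
    refine Finset.sum_eq_zero fun g' hg' => ?_
    obtain ⟨_, hnc⟩ := Finset.mem_filter.1 hg'
    rw [Dq_zero G hnc, zero_smul]
  rw [hz, add_zero]
  have hc : ∀ g' ∈ G.carrier.filter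
      (fun g' => ∃ s ∈ F2 G, bS s = fun i => SP.pm (bS g i) (bS g' i)),
      Dq G g g' • (Bm g' * P2 G) = ((2 : ℂ) ^ Fintype.card I₂) • (Bm g * P2 G) := by
    intro g' hg'
    obtain ⟨_, s, hs, hbs⟩ := Finset.mem_filter.1 hg'
    exact IL_one G hs hbs
  rw [Finset.sum_congr rfl hc, Finset.sum_const, count_lemma G hg]
  rw [← Nat.cast_smul_eq_nsmul ℂ, smul_smul]

end IL
end SP
namespace SP

variable {I₁ I₂ : Type} [Fintype I₁] [Fintype I₂] [DecidableEq I₁] [DecidableEq I₂]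

lemma trace_mul_expand (X Y : Matrix (I₂ → Fin 2) (I₂ → Fin 2) ℂ) :
    Matrix.trace (X * Y) = ∑ q : (I₂ → Fin 2) × (I₂ → Fin 2), X q.1 q.2 * Y q.2 q.1 := by
  rw [Fintype.sum_prod_type]
  simp only [Matrix.trace, Matrix.diag_apply, Matrix.mul_apply]

section Fin9

variable (G : StabilizerGroup I₁ I₂)

lemma Dq_diag {g : Matrix (Config I₁ I₂) (Config I₁ I₂) ℂ} (hg : g ∈ G.carrier) :
    Dq G g g = (2 : ℂ) ^ Fintype.card I₂ := by
  have hb1 : bS (1 : Matrix (Config I₁ I₂) (Config I₁ I₂) ℂ)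
      = fun i => SP.pm (bS g i) (bS g i) := by
    rw [bS_one]
    funext i
    exact (SP.pm_self _).symm
  rw [Dq_val G (one_mem_F2 G) hb1, str_one.2, bS_one, strP_zero_right, one_mul, one_mul]

lemma trace_Vm {g : Matrix (Config I₁ I₂) (Config I₁ I₂) ℂ} (hg : g ∈ G.carrier) :
    Matrix.trace (Vm G g) = (2 : ℂ) ^ Fintype.card I₂ := by
  rw [← Dq_diag G hg, Dq]
  rw [trace_mul_expand (Bm g * P2 G) (Bm g)]
  rw [show Matrix.trace (Vm G g) = ∑ q : (I₂ → Fin 2) × (I₂ → Fin 2), Vm G g q q from by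
    rw [Matrix.trace]; rfl]
  refine Finset.sum_congr rfl fun q _ => ?_
  show Bm g q.2 q.1 * (Bm g * P2 G) q.1 q.2 = _
  ring

lemma sum_Vm_mul {g : Matrix (Config I₁ I₂) (Config I₁ I₂) ℂ} (hg : g ∈ G.carrier) :
    ∑ g' ∈ G.carrier, Vm G g * Vm G g'
      = ((((F2 G).card * (F1 G).card : ℕ) : ℂ) * (2 : ℂ) ^ Fintype.card I₂) • Vm G g := by
  ext q q''
  rw [Matrix.sum_apply, Matrix.smul_apply]
  have hterm : ∀ g' : Matrix (Config I₁ I₂) (Config I₁ I₂) ℂ,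
      (Vm G g * Vm G g') q q''
      = Bm g q.2 q.1 * ((Dq G g g' • (Bm g' * P2 G)) q''.1 q''.2) := by
    intro g'
    rw [Matrix.mul_apply]
    have hq : ∀ q' : (I₂ → Fin 2) × (I₂ → Fin 2),
        Vm G g q q' * Vm G g' q' q''
        = ((Bm g * P2 G) q'.1 q'.2 * Bm g' q'.2 q'.1) *
            (Bm g q.2 q.1 * (Bm g' * P2 G) q''.1 q''.2) := by
      intro q'
      show (Bm g q.2 q.1 * (Bm g * P2 G) q'.1 q'.2) *
          (Bm g' q'.2 q'.1 * (Bm g' * P2 G) q''.1 q''.2) = _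
      ring
    simp_rw [hq, ← Finset.sum_mul]
    rw [show (∑ q' : (I₂ → Fin 2) × (I₂ → Fin 2),
        (Bm g * P2 G) q'.1 q'.2 * Bm g' q'.2 q'.1) = Dq G g g' from
      (trace_mul_expand (Bm g * P2 G) (Bm g')).symm]
    rw [Matrix.smul_apply, smul_eq_mul]
    ring
  simp_rw [hterm]
  rw [← Finset.mul_sum]
  rw [show (∑ g' ∈ G.carrier, (Dq G g g' • (Bm g' * P2 G)) q''.1 q''.2)
      = (∑ g' ∈ G.carrier, Dq G g g' • (Bm g' * P2 G)) q''.1 q''.2 from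
    (Matrix.sum_apply _ _ _ _).symm]
  rw [IL G hg, Matrix.smul_apply, smul_eq_mul]
  show _ = _ * (Bm g q.2 q.1 * (Bm g * P2 G) q''.1 q''.2)
  ring

lemma MM_eq : ((realign (stabDensity G))ᴴ * realign (stabDensity G)) *
      ((realign (stabDensity G))ᴴ * realign (stabDensity G))
    = (((((F2 G).card * (F1 G).card : ℕ) : ℂ) * (2 : ℂ) ^ Fintype.card I₂) *
        ((((2 : ℂ) ^ (Fintype.card I₁ + Fintype.card I₂))⁻¹) ^ 2 *
          (2 : ℂ) ^ Fintype.card I₁)) •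
      ((realign (stabDensity G))ᴴ * realign (stabDensity G)) := by
  rw [star_rep G]
  rw [Matrix.smul_mul, Matrix.mul_smul, smul_smul]
  rw [Finset.sum_mul_sum]
  rw [Finset.sum_congr rfl (fun g hg => sum_Vm_mul G hg)]
  rw [← Finset.smul_sum, smul_smul, smul_smul]
  congr 1
  ring

lemma trace_M : Matrix.trace ((realign (stabDensity G))ᴴ * realign (stabDensity G))
    = (((2 : ℂ) ^ (Fintype.card I₁ + Fintype.card I₂))⁻¹) ^ 2 *
        (2 : ℂ) ^ Fintype.card I₁ *
        ((G.carrier.card : ℂ) * (2 : ℂ) ^ Fintype.card I₂) := by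
  rw [star_rep G, Matrix.trace_smul, Matrix.trace_sum]
  rw [Finset.sum_congr rfl (fun g hg => trace_Vm G hg)]
  rw [Finset.sum_const, smul_eq_mul, nsmul_eq_mul]

end Fin9

lemma pow_collapse {α : Type} [Fintype α] [DecidableEq α]
    {A : Matrix α α ℂ} {c : ℂ} (h : A * A = c • A) :
    ∀ m : ℕ, 1 ≤ m → A ^ m = c ^ (m - 1) • A := by
  intro m hm
  induction m, hm using Nat.le_induction with
  | base => simp
  | succ m hm ih =>
      rw [pow_succ, ih, Matrix.smul_mul, h, smul_smul]
      congr 1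
      rw [Nat.add_sub_cancel, ← pow_succ, Nat.sub_add_cancel hm]

end SP
namespace SP

lemma arith (k k₁ k₂ N1 N2 m : ℕ) (hm : 1 ≤ m) :
    (((((2:ℂ)^k₂ * (2:ℂ)^k₁) * (2:ℂ)^N2) * ((((2:ℂ)^(N1+N2))⁻¹)^2 * (2:ℂ)^N1)) ^ (m-1)) *
      (((((2:ℂ)^(N1+N2))⁻¹)^2 * (2:ℂ)^N1) * ((2:ℂ)^k * (2:ℂ)^N2))
    = (2:ℂ) ^ ((k:ℤ) + ((m:ℤ) - 1) * ((k₁:ℤ)+(k₂:ℤ)) - (m:ℤ)*((N1:ℤ)+(N2:ℤ))) := by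
  have h2 : (2:ℂ) ≠ 0 := two_ne_zero
  have hm1 : ((m - 1 : ℕ) : ℤ) = (m : ℤ) - 1 := by omega
  rw [← zpow_natCast (2:ℂ) k₂, ← zpow_natCast (2:ℂ) k₁, ← zpow_natCast (2:ℂ) N2,
      ← zpow_natCast (2:ℂ) (N1+N2), ← zpow_natCast (2:ℂ) N1, ← zpow_natCast (2:ℂ) k]
  rw [← zpow_neg]
  rw [show ((2:ℂ) ^ (-((N1+N2 : ℕ) : ℤ))) ^ (2:ℕ) = (2:ℂ) ^ ((-((N1+N2:ℕ):ℤ)) * 2) from by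
    rw [← zpow_natCast ((2:ℂ) ^ (-((N1+N2:ℕ):ℤ))) 2, ← zpow_mul]
    norm_num]
  simp only [← zpow_add₀ h2]
  rw [show ((2:ℂ) ^ (((k₂:ℤ) + (k₁:ℤ) + (N2:ℤ)) + ((-((N1+N2:ℕ):ℤ)) * 2 + (N1:ℤ)))) ^ (m-1)
      = (2:ℂ) ^ ((((k₂:ℤ) + (k₁:ℤ) + (N2:ℤ)) + ((-((N1+N2:ℕ):ℤ)) * 2 + (N1:ℤ))) * ((m-1 : ℕ) : ℤ))
      from by rw [← zpow_natCast ((2:ℂ) ^ _) (m-1), ← zpow_mul]]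
  simp only [← zpow_add₀ h2]
  congr 1
  push_cast [hm1]
  ring

end SP

/-- CCNR replica formula for a stabilizer state: for every even `n ≥ 2`,
`Tr[(R_ρ† R_ρ)^{n/2}] = 2^{k + (n/2 − 1)(k₁ + k₂) − (n/2)·N_A}`. -/
theorem trace_realign_pow {I₁ I₂ : Type} [Fintype I₁] [Fintype I₂]
    [DecidableEq I₁] [DecidableEq I₂]
    (G : StabilizerGroup I₁ I₂) (k k₁ k₂ : ℕ)
    (hk : G.carrier.card = 2 ^ k)
    (hk₁ : Set.ncard {g | g ∈ G.carrier ∧ SupportedIn1 g} = 2 ^ k₁)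
    (hk₂ : Set.ncard {g | g ∈ G.carrier ∧ SupportedIn2 g} = 2 ^ k₂)
    (n : ℕ) (hn : 2 ≤ n) (hne : Even n) :
    (((realign (stabDensity G))ᴴ * realign (stabDensity G)) ^ (n / 2)).trace =
      (2 : ℂ) ^ ((k : ℤ) + (((n / 2 : ℕ) : ℤ) - 1) * ((k₁ : ℤ) + (k₂ : ℤ)) -
        ((n / 2 : ℕ) : ℤ) * ((Fintype.card I₁ : ℤ) + (Fintype.card I₂ : ℤ))) := by

  classical
  have hF2 : (SP.F2 G).card = 2 ^ k₂ := by
    rw [← Set.ncard_coe_finset, ← SP.F2_coe G]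
    exact hk₂
  have hF1 : (SP.F1 G).card = 2 ^ k₁ := by
    rw [← Set.ncard_coe_finset, ← SP.F1_coe G]
    exact hk₁
  have hm1 : 1 ≤ n / 2 := by omega
  have hpow := SP.pow_collapse (SP.MM_eq G) (n / 2) hm1
  rw [hpow, Matrix.trace_smul, smul_eq_mul, SP.trace_M G, hF2, hF1, hk]
  have harith := SP.arith k k₁ k₂ (Fintype.card I₁) (Fintype.card I₂) (n / 2) hm1
  push_cast at harith ⊢
  convert harith using 2
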